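/- Let K be a field and a ∈ K. Let ℋ := {M ∈ M_3(K) : tr M = a}. Then every invertible 3×3 matrix over K is a finite product of matrices belonging to ℋ. -/

import Mathlib

open Matrix

lemma key_factor {K : Type*} [Field K] (a : K) (M : Matrix (Fin 3) (Fin 3) K)
    (h : M 0 0 ≠ 0) :
    ∃ A B : Matrix (Fin 3) (Fin 3) K, A.trace = a ∧ B.trace = a ∧ A * B = M := by
  set t := (a - M 0 1 + a * M 0 2 - M 1 2 - M 2 0) / M 0 0 with ht
  refine ⟨M * !![t,0,1; 1,0,0; -a,1,0], !![0,1,0; 0,a,1; 1,-t,0], ?_, ?_, ?_⟩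
  · rw [Matrix.trace_fin_three]
    simp only [Matrix.mul_apply, Fin.sum_univ_three, Matrix.cons_val', Matrix.cons_val_zero,
      Matrix.cons_val_one, Matrix.head_cons, Matrix.head_fin_const, Matrix.cons_val_fin_one,
      Matrix.empty_val', Matrix.cons_val_two, Matrix.tail_cons, Matrix.vecHead, Matrix.vecTail,
      Function.comp]
    norm_num [Matrix.vecHead, Matrix.vecTail, Matrix.cons_val_two]
    rw [ht]
    field_simp
    ring
  · rw [Matrix.trace_fin_three]; norm_num [Matrix.cons_val_two]
  · rw [Matrix.mul_assoc]
    have h1 : (!![t,0,1; 1,0,0; -a,1,0] : Matrix (Fin 3) (Fin 3) K) * !![0,1,0; 0,a,1; 1,-t,0] = 1 := by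
      ext i j
      fin_cases i <;> fin_cases j <;>
        simp [Matrix.mul_apply, Fin.sum_univ_three, Matrix.one_apply, Matrix.vecHead, Matrix.vecTail] <;> ring
    rw [h1, Matrix.mul_one]

theorem GL3_subset_trace_hyperplane_semigroup (K : Type*) [Field K] (a : K)
    (M : Matrix (Fin 3) (Fin 3) K) (hM : IsUnit M) :
    ∃ l : List (Matrix (Fin 3) (Fin 3) K), l ≠ [] ∧ (∀ A ∈ l, A.trace = a) ∧ l.prod = M := by
  have hdet : M.det ≠ 0 := ((Matrix.isUnit_iff_isUnit_det M).mp hM).ne_zero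
  -- choose C, Cinv with Cinv * C = 1, trace Cinv = a, and (C * M) 0 0 ≠ 0
  have main : ∀ C Cinv : Matrix (Fin 3) (Fin 3) K, Cinv * C = 1 → Cinv.trace = a →
      (C * M) 0 0 ≠ 0 →
      ∃ l : List (Matrix (Fin 3) (Fin 3) K), l ≠ [] ∧ (∀ A ∈ l, A.trace = a) ∧ l.prod = M := by
    intro C Cinv hCi hCtr hne
    obtain ⟨A, B, hA, hB, hAB⟩ := key_factor a (C * M) hne
    refine ⟨[Cinv, A, B], by simp, ?_, ?_⟩
    · intro X hX
      simp only [List.mem_cons, List.not_mem_nil, or_false] at hX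
      rcases hX with rfl | rfl | rfl <;> assumption
    · simp only [List.prod_cons, List.prod_nil, Matrix.mul_one]
      rw [hAB, ← Matrix.mul_assoc, hCi, Matrix.one_mul]
  by_cases h10 : M 1 0 ≠ 0
  · refine main !![(0:K),1,0; -a,0,1; 1,0,0] !![0,0,1; 1,0,0; 0,1,a] ?_ ?_ ?_
    · ext i j
      fin_cases i <;> fin_cases j <;>
        simp [Matrix.mul_apply, Fin.sum_univ_three, Matrix.one_apply, Matrix.vecHead, Matrix.vecTail] <;> ring
    · rw [Matrix.trace_fin_three]; norm_num [Matrix.cons_val_two]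
    · simpa [Matrix.mul_apply, Fin.sum_univ_three, Matrix.vecHead, Matrix.vecTail] using h10
  push_neg at h10
  by_cases h00 : M 0 0 ≠ 0
  · refine main !![(1:K),1,0; -a,0,1; 1,0,0] !![0,0,1; 1,0,-1; 0,1,a] ?_ ?_ ?_
    · ext i j
      fin_cases i <;> fin_cases j <;>
        simp [Matrix.mul_apply, Fin.sum_univ_three, Matrix.one_apply, Matrix.vecHead, Matrix.vecTail] <;> ring
    · rw [Matrix.trace_fin_three]; norm_num [Matrix.cons_val_two]
    · simpa [Matrix.mul_apply, Fin.sum_univ_three, Matrix.vecHead, Matrix.vecTail, h10] using h00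
  push_neg at h00
  by_cases h20 : M 2 0 ≠ 0
  · refine main !![(0:K),0,1; 1,0,0; -a,1,0] !![0,1,0; 0,a,1; 1,0,0] ?_ ?_ ?_
    · ext i j
      fin_cases i <;> fin_cases j <;>
        simp [Matrix.mul_apply, Fin.sum_univ_three, Matrix.one_apply, Matrix.vecHead, Matrix.vecTail] <;> ring
    · rw [Matrix.trace_fin_three]; norm_num [Matrix.cons_val_two]
    · simpa [Matrix.mul_apply, Fin.sum_univ_three, Matrix.vecHead, Matrix.vecTail] using h20
  push_neg at h20
  exact absurd (by simp [Matrix.det_fin_three, h00, h10, h20]) hdet
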